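/- arXiv:2407.08549 — 3 statements merged into one kernel-verified Lean document; each statement's English description precedes it below -/
import Mathlib

section
/- For n ≥ 5 odd and m = (n-3)/2, the exponent max{2(n²+2n-2)/(n²-1), 2(n-m)/(n-m-1)} is strictly smaller than the Hickman–Iliopoulou exponent 2(3n-2m+1)/(3n-2m-3). -/
/-- For `n ≥ 5` odd and `m = (n-3)/2` (encoded as `n = 2*m + 3`), the exponent
`max {2(n²+2n-2)/(n²-1), 2(n-m)/(n-m-1)}` is strictly smaller than the
Hickman–Iliopoulou exponent `2(3n-2m+1)/(3n-2m-3)`, as rational numbers. -/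
theorem exponent_improves_HI (n m : ℕ) (hn : 5 ≤ n) (hodd : n = 2 * m + 3) :
    max ((2 * ((n : ℚ) ^ 2 + 2 * n - 2)) / ((n : ℚ) ^ 2 - 1))
        ((2 * ((n : ℚ) - m)) / ((n : ℚ) - m - 1))
      < (2 * (3 * (n : ℚ) - 2 * m + 1)) / (3 * (n : ℚ) - 2 * m - 3) := by
  subst hodd
  have hm : 1 ≤ m := by omega
  have hq : (1 : ℚ) ≤ (m : ℚ) := by exact_mod_cast hm
  push_cast
  set q : ℚ := (m : ℚ) with hqdef
  apply max_lt
  · rw [div_lt_div_iff₀ (by nlinarith) (by nlinarith)]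
    nlinarith
  · rw [div_lt_div_iff₀ (by nlinarith) (by nlinarith)]
    nlinarith
end

section
/- The broad norm satisfies a Hölder-type inequality: if 1 ≤ p, p₁, p₂ < ∞, α₁ + α₂ = 1 with α₁, α₂ ∈ [0,1], 1/p = α₁/p₁ + α₂/p₂, and A = A₁ + A₂, then ‖E f‖_{HL^p_A(U)} ≤ ‖E f‖_{HL^{p₁}_{A₁}(U)}^{α₁} · ‖E f‖_{HL^{p₂}_{A₂}(U)}^{α₂}. -/
open scoped BigOperators

/-- The broad quantity on a single ball `B`: the minimum over choices of `A` affine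
subspaces (abstracted as elements of a type `V`, with `near τ W` meaning
`dist(τ, W) ≤ K₁⁻¹`) of the maximum of `(b τ)^p` over caps `τ` far from every `V_s`. -/
noncomputable def broadMass {T V : Type} [Fintype T] (near : T → V → Prop)
    (A : ℕ) (p : ℝ) (b : T → ℝ) : ℝ :=
  ⨅ Vs : Fin A → V, ⨆ τ : {τ : T // ∀ s, ¬ near τ (Vs s)}, (b τ.1) ^ p

private lemma broadMass_nonneg {T V : Type} [Fintype T] (near : T → V → Prop)
    (A : ℕ) (p : ℝ) (b : T → ℝ) (hb : ∀ τ, 0 ≤ b τ) :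
    0 ≤ broadMass near A p b :=
  Real.iInf_nonneg fun _ => Real.iSup_nonneg fun τ => Real.rpow_nonneg (hb τ.1) p

/-- Finite-sum Hölder in product form. -/
private lemma sum_holder {ι : Type} (s : Finset ι) (a b : ι → ℝ)
    (ha : ∀ i ∈ s, 0 ≤ a i) (hb : ∀ i ∈ s, 0 ≤ b i)
    {θ₁ θ₂ : ℝ} (h1 : 0 ≤ θ₁) (h2 : 0 ≤ θ₂) (hs : θ₁ + θ₂ = 1) :
    ∑ i ∈ s, (a i) ^ θ₁ * (b i) ^ θ₂ ≤
      (∑ i ∈ s, a i) ^ θ₁ * (∑ i ∈ s, b i) ^ θ₂ := by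
  rcases eq_or_lt_of_le h1 with h1' | h1'
  · have h : θ₂ = 1 := by linarith
    simp [← h1', h, Real.rpow_zero, Real.rpow_one]
  rcases eq_or_lt_of_le h2 with h2' | h2'
  · have h : θ₁ = 1 := by linarith
    simp [← h2', h, Real.rpow_zero, Real.rpow_one]
  have hpq : Real.HolderConjugate (1 / θ₁) (1 / θ₂) := by
    rw [Real.holderConjugate_iff]
    constructor
    · rw [lt_div_iff₀ h1']; linarith
    · rw [one_div, one_div, inv_inv, inv_inv]; exact hs
  have H := Real.inner_le_Lp_mul_Lq_of_nonneg (s := s)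
      (f := fun i => (a i) ^ θ₁) (g := fun i => (b i) ^ θ₂) hpq
      (fun i _ => Real.rpow_nonneg (ha i ‹_›) _)
      (fun i _ => Real.rpow_nonneg (hb i ‹_›) _)
  rw [one_div_one_div, one_div_one_div] at H
  calc ∑ i ∈ s, (a i) ^ θ₁ * (b i) ^ θ₂
      ≤ (∑ i ∈ s, ((a i) ^ θ₁) ^ (1 / θ₁)) ^ θ₁ * (∑ i ∈ s, ((b i) ^ θ₂) ^ (1 / θ₂)) ^ θ₂ := H
    _ = (∑ i ∈ s, a i) ^ θ₁ * (∑ i ∈ s, b i) ^ θ₂ := by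
        congr 1
        · congr 1
          refine Finset.sum_congr rfl fun i hi => ?_
          rw [← Real.rpow_mul (ha i hi), mul_one_div_cancel h1'.ne', Real.rpow_one]
        · congr 1
          refine Finset.sum_congr rfl fun i hi => ?_
          rw [← Real.rpow_mul (hb i hi), mul_one_div_cancel h2'.ne', Real.rpow_one]

/-- Pointwise (per-ball) Hölder for the broad mass, with `A = A₁ + A₂`. -/
private lemma broadMass_holder {T V : Type} [Fintype T] (near : T → V → Prop)
    (A₁ A₂ : ℕ) (p p₁ p₂ θ₁ θ₂ : ℝ) (b b₁ b₂ : T → ℝ)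
    (hb : ∀ τ, 0 ≤ b τ) (hb₁ : ∀ τ, 0 ≤ b₁ τ) (hb₂ : ∀ τ, 0 ≤ b₂ τ)
    (hθ₁ : 0 ≤ θ₁) (hθ₂ : 0 ≤ θ₂)
    (hpt : ∀ τ, b τ ^ p ≤ ((b₁ τ) ^ p₁) ^ θ₁ * ((b₂ τ) ^ p₂) ^ θ₂) :
    broadMass near (A₁ + A₂) p b ≤
      (broadMass near A₁ p₁ b₁) ^ θ₁ * (broadMass near A₂ p₂ b₂) ^ θ₂ := by
  set m₁ := broadMass near A₁ p₁ b₁ with hm₁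
  set m₂ := broadMass near A₂ p₂ b₂ with hm₂
  have hm₁0 : 0 ≤ m₁ := broadMass_nonneg _ _ _ _ hb₁
  have hm₂0 : 0 ≤ m₂ := broadMass_nonneg _ _ _ _ hb₂
  by_cases hne : Nonempty (Fin (A₁ + A₂) → V)
  · have hne₁ : Nonempty (Fin A₁ → V) := ⟨fun i => hne.some (Fin.castAdd A₂ i)⟩
    have hne₂ : Nonempty (Fin A₂ → V) := ⟨fun i => hne.some (Fin.natAdd A₁ i)⟩
    set f₁ : (Fin A₁ → V) → ℝ :=
      fun W => ⨆ τ : {τ : T // ∀ s, ¬ near τ (W s)}, (b₁ τ.1) ^ p₁ with hf₁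
    set f₂ : (Fin A₂ → V) → ℝ :=
      fun W => ⨆ τ : {τ : T // ∀ s, ¬ near τ (W s)}, (b₂ τ.1) ^ p₂ with hf₂
    have hf₁0 : ∀ W, 0 ≤ f₁ W :=
      fun W => Real.iSup_nonneg fun τ => Real.rpow_nonneg (hb₁ τ.1) _
    have hf₂0 : ∀ W, 0 ≤ f₂ W :=
      fun W => Real.iSup_nonneg fun τ => Real.rpow_nonneg (hb₂ τ.1) _
    have key : ∀ (W₁ : Fin A₁ → V) (W₂ : Fin A₂ → V),
        broadMass near (A₁ + A₂) p b ≤ (f₁ W₁) ^ θ₁ * (f₂ W₂) ^ θ₂ := by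
      intro W₁ W₂
      have hbdd : BddBelow (Set.range fun Vs : Fin (A₁ + A₂) → V =>
          ⨆ τ : {τ : T // ∀ s, ¬ near τ (Vs s)}, (b τ.1) ^ p) := by
        refine ⟨0, ?_⟩
        rintro x ⟨Vs, rfl⟩
        exact Real.iSup_nonneg fun τ => Real.rpow_nonneg (hb τ.1) p
      have h1 : broadMass near (A₁ + A₂) p b ≤
          ⨆ τ : {τ : T // ∀ s, ¬ near τ (Fin.append W₁ W₂ s)}, (b τ.1) ^ p :=
        ciInf_le hbdd (Fin.append W₁ W₂)
      refine h1.trans (Real.iSup_le ?_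
        (mul_nonneg (Real.rpow_nonneg (hf₁0 W₁) _) (Real.rpow_nonneg (hf₂0 W₂) _)))
      intro τ
      have hτ1 : ∀ s : Fin A₁, ¬ near τ.1 (W₁ s) := fun s => by
        have h := τ.2 (Fin.castAdd A₂ s); rwa [Fin.append_left] at h
      have hτ2 : ∀ s : Fin A₂, ¬ near τ.1 (W₂ s) := fun s => by
        have h := τ.2 (Fin.natAdd A₁ s); rwa [Fin.append_right] at h
      have hle₁ : (b₁ τ.1) ^ p₁ ≤ f₁ W₁ := by
        simp only [hf₁]
        exact le_ciSup (f := fun τ : {τ : T // ∀ s, ¬ near τ (W₁ s)} => (b₁ τ.1) ^ p₁)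
          (Set.Finite.bddAbove (Set.finite_range _))
          (⟨τ.1, hτ1⟩ : {τ : T // ∀ s, ¬ near τ (W₁ s)})
      have hle₂ : (b₂ τ.1) ^ p₂ ≤ f₂ W₂ := by
        simp only [hf₂]
        exact le_ciSup (f := fun τ : {τ : T // ∀ s, ¬ near τ (W₂ s)} => (b₂ τ.1) ^ p₂)
          (Set.Finite.bddAbove (Set.finite_range _))
          (⟨τ.1, hτ2⟩ : {τ : T // ∀ s, ¬ near τ (W₂ s)})
      refine (hpt τ.1).trans ?_
      exact mul_le_mul
        (Real.rpow_le_rpow (Real.rpow_nonneg (hb₁ τ.1) _) hle₁ hθ₁)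
        (Real.rpow_le_rpow (Real.rpow_nonneg (hb₂ τ.1) _) hle₂ hθ₂)
        (Real.rpow_nonneg (Real.rpow_nonneg (hb₂ τ.1) _) _)
        (Real.rpow_nonneg (hf₁0 W₁) _)
    have tend : Filter.Tendsto (fun δ : ℝ => (m₁ + δ) ^ θ₁ * (m₂ + δ) ^ θ₂)
        (nhdsWithin 0 (Set.Ioi 0)) (nhds (m₁ ^ θ₁ * m₂ ^ θ₂)) := by
      have c₁ : ContinuousAt (fun x : ℝ => x ^ θ₁) m₁ :=
        Real.continuousAt_rpow_const _ _ (Or.inr hθ₁)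
      have c₂ : ContinuousAt (fun x : ℝ => x ^ θ₂) m₂ :=
        Real.continuousAt_rpow_const _ _ (Or.inr hθ₂)
      have t₁ : Filter.Tendsto (fun δ : ℝ => m₁ + δ) (nhdsWithin 0 (Set.Ioi 0)) (nhds m₁) := by
        have h : Filter.Tendsto (fun δ : ℝ => m₁ + δ) (nhds 0) (nhds (m₁ + 0)) :=
          (continuous_const.add continuous_id).tendsto 0
        rw [add_zero] at h
        exact h.mono_left nhdsWithin_le_nhds
      have t₂ : Filter.Tendsto (fun δ : ℝ => m₂ + δ) (nhdsWithin 0 (Set.Ioi 0)) (nhds m₂) := by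
        have h : Filter.Tendsto (fun δ : ℝ => m₂ + δ) (nhds 0) (nhds (m₂ + 0)) :=
          (continuous_const.add continuous_id).tendsto 0
        rw [add_zero] at h
        exact h.mono_left nhdsWithin_le_nhds
      exact (c₁.tendsto.comp t₁).mul (c₂.tendsto.comp t₂)
    refine ge_of_tendsto tend ?_
    filter_upwards [self_mem_nhdsWithin] with δ hδ
    have hδ0 : (0:ℝ) < δ := hδ
    obtain ⟨W₁, hW₁⟩ := exists_lt_of_ciInf_lt
      (show (⨅ W : Fin A₁ → V, f₁ W) < m₁ + δ from lt_add_of_pos_right _ hδ0)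
    obtain ⟨W₂, hW₂⟩ := exists_lt_of_ciInf_lt
      (show (⨅ W : Fin A₂ → V, f₂ W) < m₂ + δ from lt_add_of_pos_right _ hδ0)
    refine (key W₁ W₂).trans ?_
    exact mul_le_mul
      (Real.rpow_le_rpow (hf₁0 W₁) hW₁.le hθ₁)
      (Real.rpow_le_rpow (hf₂0 W₂) hW₂.le hθ₂)
      (Real.rpow_nonneg (hf₂0 W₂) _)
      (Real.rpow_nonneg (by linarith) _)
  · have hie : IsEmpty (Fin (A₁ + A₂) → V) := not_nonempty_iff.mp hne
    have h0 : broadMass near (A₁ + A₂) p b = 0 := Real.iInf_of_isEmpty _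
    rw [h0]
    exact mul_nonneg (Real.rpow_nonneg hm₁0 _) (Real.rpow_nonneg hm₂0 _)

/-- Hölder-type inequality for the broad norm: if `1 ≤ p, p₁, p₂ < ∞`,
`α₁ + α₂ = 1` with `α₁, α₂ ∈ [0,1]`, `1/p = α₁/p₁ + α₂/p₂` and `A = A₁ + A₂`, then
`‖Ef‖_{HL^p_A(U)} ≤ ‖Ef‖_{HL^{p₁}_{A₁}(U)}^{α₁} ‖Ef‖_{HL^{p₂}_{A₂}(U)}^{α₂}`.
Here `N B τ`, `N₁ B τ`, `N₂ B τ` stand for the cap-wise norms `‖E f_τ‖_{L^p(B)}`,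
`‖E f_τ‖_{L^{p₁}(B)}`, `‖E f_τ‖_{L^{p₂}(B)}`, which satisfy the per-ball Hölder
(log-convexity) bound `N B τ ≤ (N₁ B τ)^{α₁} (N₂ B τ)^{α₂}`. -/
theorem broad_norm_holder {T V ι : Type} [Fintype T] (near : T → V → Prop)
    (𝓑 : Finset ι) (N N₁ N₂ : ι → T → ℝ)
    (hN : ∀ B τ, 0 ≤ N B τ) (hN₁ : ∀ B τ, 0 ≤ N₁ B τ) (hN₂ : ∀ B τ, 0 ≤ N₂ B τ)
    (p p₁ p₂ α₁ α₂ : ℝ) (hp : 1 ≤ p) (hp₁ : 1 ≤ p₁) (hp₂ : 1 ≤ p₂)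
    (hα₁ : 0 ≤ α₁) (hα₂ : 0 ≤ α₂) (hαsum : α₁ + α₂ = 1)
    (hexp : 1 / p = α₁ / p₁ + α₂ / p₂)
    (hHolder : ∀ B τ, N B τ ≤ (N₁ B τ) ^ α₁ * (N₂ B τ) ^ α₂)
    (A A₁ A₂ : ℕ) (hA : A = A₁ + A₂) :
    (∑ B ∈ 𝓑, broadMass near A p (N B)) ^ (1 / p) ≤
      ((∑ B ∈ 𝓑, broadMass near A₁ p₁ (N₁ B)) ^ (1 / p₁)) ^ α₁ *
      ((∑ B ∈ 𝓑, broadMass near A₂ p₂ (N₂ B)) ^ (1 / p₂)) ^ α₂ := by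
  subst hA
  have hp0 : (0:ℝ) < p := lt_of_lt_of_le one_pos hp
  have hp₁0 : (0:ℝ) < p₁ := lt_of_lt_of_le one_pos hp₁
  have hp₂0 : (0:ℝ) < p₂ := lt_of_lt_of_le one_pos hp₂
  set θ₁ := p * α₁ / p₁ with hθ₁def
  set θ₂ := p * α₂ / p₂ with hθ₂def
  have hθ₁0 : 0 ≤ θ₁ := by positivity
  have hθ₂0 : 0 ≤ θ₂ := by positivity
  have hθsum : θ₁ + θ₂ = 1 := by
    have h : θ₁ + θ₂ = p * (α₁ / p₁ + α₂ / p₂) := by rw [hθ₁def, hθ₂def]; ring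
    rw [h, ← hexp]
    field_simp
  -- pointwise hypothesis for each ball
  have hpt : ∀ B τ, N B τ ^ p ≤ ((N₁ B τ) ^ p₁) ^ θ₁ * ((N₂ B τ) ^ p₂) ^ θ₂ := by
    intro B τ
    have h := Real.rpow_le_rpow (hN B τ) (hHolder B τ) hp0.le
    refine h.trans (le_of_eq ?_)
    rw [Real.mul_rpow (Real.rpow_nonneg (hN₁ B τ) _) (Real.rpow_nonneg (hN₂ B τ) _),
      ← Real.rpow_mul (hN₁ B τ), ← Real.rpow_mul (hN₂ B τ),
      ← Real.rpow_mul (hN₁ B τ), ← Real.rpow_mul (hN₂ B τ)]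
    congr 1
    · congr 1
      rw [hθ₁def]; field_simp
    · congr 1
      rw [hθ₂def]; field_simp
  have hball : ∀ B ∈ 𝓑, broadMass near (A₁ + A₂) p (N B) ≤
      (broadMass near A₁ p₁ (N₁ B)) ^ θ₁ * (broadMass near A₂ p₂ (N₂ B)) ^ θ₂ := by
    intro B _
    exact broadMass_holder near A₁ A₂ p p₁ p₂ θ₁ θ₂ (N B) (N₁ B) (N₂ B)
      (hN B) (hN₁ B) (hN₂ B) hθ₁0 hθ₂0 (hpt B)
  have hsum : ∑ B ∈ 𝓑, broadMass near (A₁ + A₂) p (N B) ≤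
      (∑ B ∈ 𝓑, broadMass near A₁ p₁ (N₁ B)) ^ θ₁ *
      (∑ B ∈ 𝓑, broadMass near A₂ p₂ (N₂ B)) ^ θ₂ :=
    le_trans (Finset.sum_le_sum hball)
      (sum_holder 𝓑 _ _ (fun B _ => broadMass_nonneg _ _ _ _ (hN₁ B))
        (fun B _ => broadMass_nonneg _ _ _ _ (hN₂ B)) hθ₁0 hθ₂0 hθsum)
  have hS0 : 0 ≤ ∑ B ∈ 𝓑, broadMass near (A₁ + A₂) p (N B) :=
    Finset.sum_nonneg fun B _ => broadMass_nonneg _ _ _ _ (hN B)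
  have hS₁0 : 0 ≤ ∑ B ∈ 𝓑, broadMass near A₁ p₁ (N₁ B) :=
    Finset.sum_nonneg fun B _ => broadMass_nonneg _ _ _ _ (hN₁ B)
  have hS₂0 : 0 ≤ ∑ B ∈ 𝓑, broadMass near A₂ p₂ (N₂ B) :=
    Finset.sum_nonneg fun B _ => broadMass_nonneg _ _ _ _ (hN₂ B)
  calc (∑ B ∈ 𝓑, broadMass near (A₁ + A₂) p (N B)) ^ (1 / p)
      ≤ ((∑ B ∈ 𝓑, broadMass near A₁ p₁ (N₁ B)) ^ θ₁ *
          (∑ B ∈ 𝓑, broadMass near A₂ p₂ (N₂ B)) ^ θ₂) ^ (1 / p) :=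
        Real.rpow_le_rpow hS0 hsum (by positivity)
    _ = ((∑ B ∈ 𝓑, broadMass near A₁ p₁ (N₁ B)) ^ (1 / p₁)) ^ α₁ *
        ((∑ B ∈ 𝓑, broadMass near A₂ p₂ (N₂ B)) ^ (1 / p₂)) ^ α₂ := by
        rw [Real.mul_rpow (Real.rpow_nonneg hS₁0 _) (Real.rpow_nonneg hS₂0 _),
          ← Real.rpow_mul hS₁0, ← Real.rpow_mul hS₂0,
          ← Real.rpow_mul hS₁0, ← Real.rpow_mul hS₂0]
        congr 1
        · congr 1
          rw [hθ₁def]; field_simp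
        · congr 1
          rw [hθ₂def]; field_simp
end

section
/- A line intersects at most D+1 of the open cells cut out by a polynomial of degree D: if P : ℝⁿ → ℝ is a nonzero polynomial of total degree at most D and ℓ : ℝ → ℝⁿ is a line with P∘ℓ not identically zero, then the image of ℓ meets at most D+1 connected components of {x : P(x) ≠ 0}. -/
open Set Polynomial

/-- An open, bounded-below, nonempty subset of `ℝ` does not contain its infimum. -/
lemma sInf_not_mem_of_isOpen {I : Set ℝ} (hI : IsOpen I) (hbdd : BddBelow I)
    (hne : I.Nonempty) : sInf I ∉ I := by
  intro hmem
  obtain ⟨ε, hε, hball⟩ := Metric.isOpen_iff.mp hI _ hmem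
  have h1 : sInf I - ε / 2 ∈ I := by
    apply hball
    rw [Metric.mem_ball, Real.dist_eq]
    have h2 : sInf I - ε / 2 - sInf I = -(ε / 2) := by ring
    rw [h2, abs_neg, abs_of_pos (by linarith)]
    linarith
  have := csInf_le hbdd h1
  linarith

/-- The complement of a finite set `Z ⊆ ℝ` has at most `Z.ncard + 1` connected
components. -/
lemma components_compl_finite_card (Z : Set ℝ) (hZ : Z.Finite) :
    ((fun t => connectedComponentIn Zᶜ t) '' Zᶜ).Finite ∧
      ((fun t => connectedComponentIn Zᶜ t) '' Zᶜ).ncard ≤ Z.ncard + 1 := by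
  set T : Set ℝ := Zᶜ with hT
  have hTopen : IsOpen T := hZ.isClosed.isOpen_compl
  set F : Set (Set ℝ) := (fun t => connectedComponentIn T t) '' T with hF
  -- basic facts about elements of F
  have hmemF : ∀ I ∈ F, ∃ t ∈ T, I = connectedComponentIn T t := by
    rintro I ⟨t, ht, rfl⟩; exact ⟨t, ht, rfl⟩
  have hne' : ∀ {I : Set ℝ}, I ∈ F → I.Nonempty := by
    rintro I hI
    obtain ⟨t, ht, rfl⟩ := hmemF I hI
    exact ⟨t, mem_connectedComponentIn ht⟩
  have hopen : ∀ {I : Set ℝ}, I ∈ F → IsOpen I := by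
    rintro I hI
    obtain ⟨t, ht, rfl⟩ := hmemF I hI
    exact hTopen.connectedComponentIn
  have hord : ∀ {I : Set ℝ}, I ∈ F → I.OrdConnected := by
    rintro I hI
    obtain ⟨t, ht, rfl⟩ := hmemF I hI
    exact isPreconnected_connectedComponentIn.ordConnected
  have hcomp : ∀ {I : Set ℝ}, I ∈ F → ∀ {z : ℝ}, z ∈ I → I = connectedComponentIn T z := by
    rintro I hI z hz
    obtain ⟨t, ht, rfl⟩ := hmemF I hI
    exact connectedComponentIn_eq hz
  -- if I ∈ F is bounded below, its infimum lies in Z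
  have hinf_not_mem : ∀ {I : Set ℝ}, I ∈ F → BddBelow I → sInf I ∉ I :=
    fun {I} hI hbdd => sInf_not_mem_of_isOpen (hopen hI) hbdd (hne' hI)
  have hinfZ : ∀ {I : Set ℝ}, I ∈ F → BddBelow I → sInf I ∈ Z := by
    intro I hI hbdd
    by_contra hc
    have hcT : sInf I ∈ T := hc
    have hcl : sInf I ∈ closure I := csInf_mem_closure (hne' hI) hbdd
    have hK : IsOpen (connectedComponentIn T (sInf I)) := hTopen.connectedComponentIn
    obtain ⟨z, hzK, hzI⟩ := mem_closure_iff.mp hcl _ hK (mem_connectedComponentIn hcT)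
    have h1 : I = connectedComponentIn T z := hcomp hI hzI
    have h2 : connectedComponentIn T (sInf I) = connectedComponentIn T z :=
      connectedComponentIn_eq hzK
    have h3 : sInf I ∈ connectedComponentIn T (sInf I) := mem_connectedComponentIn hcT
    rw [h2, ← h1] at h3
    exact hinf_not_mem hI hbdd h3
  -- the injection into `Option ℝ`
  classical
  set φ : Set ℝ → Option ℝ := fun I => if BddBelow I then some (sInf I) else none with hφ
  have hinj : Set.InjOn φ F := by
    intro I hI J hJ hIJ
    -- distinct components are disjoint, so it suffices to find a common point
    suffices h : (I ∩ J).Nonempty by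
      obtain ⟨z, hzI, hzJ⟩ := h
      rw [hcomp hI hzI, hcomp hJ hzJ]
    obtain ⟨x, hx⟩ := hne' hI
    obtain ⟨y, hy⟩ := hne' hJ
    by_cases hbI : BddBelow I
    · by_cases hbJ : BddBelow J
      · -- both bounded below, equal infima
        have hinf : sInf I = sInf J := by
          simp only [hφ, if_pos hbI, if_pos hbJ, Option.some.injEq] at hIJ
          exact hIJ
        have hxlt : sInf I < x := lt_of_le_of_ne (csInf_le hbI hx)
          (fun h => hinf_not_mem hI hbI (h ▸ hx))
        have hylt : sInf J < y := lt_of_le_of_ne (csInf_le hbJ hy)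
          (fun h => hinf_not_mem hJ hbJ (h ▸ hy))
        set m := min x y with hm
        have hmI : sInf I < m := lt_min hxlt (hinf ▸ hylt)
        have hmJ : sInf J < m := hinf ▸ hmI
        obtain ⟨z, hzI, hzm⟩ := (csInf_lt_iff hbI (hne' hI)).mp hmI
        obtain ⟨w, hwJ, hwm⟩ := (csInf_lt_iff hbJ (hne' hJ)).mp hmJ
        rcases le_total z w with hzw | hwz
        · exact ⟨w, (hord hI).out hzI hx ⟨hzw, hwm.le.trans (min_le_left _ _)⟩, hwJ⟩
        · exact ⟨z, hzI, (hord hJ).out hwJ hy ⟨hwz, hzm.le.trans (min_le_right _ _)⟩⟩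
      · simp only [hφ, if_pos hbI, if_neg hbJ] at hIJ
        exact absurd hIJ (by simp)
    · by_cases hbJ : BddBelow J
      · simp only [hφ, if_neg hbI, if_pos hbJ] at hIJ
        exact absurd hIJ (by simp)
      · -- both unbounded below
        set m := min x y - 1 with hm
        obtain ⟨z, hzI, hzm⟩ := not_bddBelow_iff.mp hbI m
        obtain ⟨w, hwJ, hwm⟩ := not_bddBelow_iff.mp hbJ m
        refine ⟨m, (hord hI).out hzI hx ⟨hzm.le, ?_⟩, (hord hJ).out hwJ hy ⟨hwm.le, ?_⟩⟩
        · have := min_le_left x y; linarith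
        · have := min_le_right x y; linarith
  have himg : φ '' F ⊆ insert none (some '' Z) := by
    rintro _ ⟨I, hI, rfl⟩
    by_cases hb : BddBelow I
    · simp only [hφ, if_pos hb]
      exact mem_insert_of_mem _ ⟨sInf I, hinfZ hI hb, rfl⟩
    · simp only [hφ, if_neg hb]
      exact mem_insert _ _
  have htarget : (insert none (some '' Z) : Set (Option ℝ)).Finite :=
    ((hZ.image _).insert _)
  have hFfin : F.Finite := Set.Finite.of_finite_image (htarget.subset himg) hinj
  refine ⟨hFfin, ?_⟩
  calc F.ncard = (φ '' F).ncard := (Set.ncard_image_of_injOn hinj).symm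
    _ ≤ (insert none (some '' Z) : Set (Option ℝ)).ncard :=
        Set.ncard_le_ncard himg htarget
    _ ≤ (some '' Z).ncard + 1 := Set.ncard_insert_le _ _
    _ ≤ Z.ncard + 1 := by
        exact add_le_add_left (Set.ncard_image_le hZ) 1

/-- Evaluation of the substituted univariate polynomial. -/
lemma eval_aeval_line {n : ℕ} (P : MvPolynomial (Fin n) ℝ) (a v : Fin n → ℝ) (t : ℝ) :
    Polynomial.eval t
        (MvPolynomial.aeval (fun i => Polynomial.C (a i) + Polynomial.C (v i) * Polynomial.X) P)
      = MvPolynomial.eval (a + t • v) P := by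
  have : (a + t • v) = fun i => a i + t * v i := by
    funext i; simp [mul_comm]
  rw [this]
  induction P using MvPolynomial.induction_on with
  | C r => simp
  | add p q hp hq => simp [hp, hq]
  | mul_X p i hp =>
    simp only [map_mul, Polynomial.eval_mul, hp, MvPolynomial.aeval_X, MvPolynomial.eval_X,
      Polynomial.eval_add, Polynomial.eval_C, Polynomial.eval_X]
    ring

/-- Degree bound for the substituted univariate polynomial. -/
lemma natDegree_aeval_line {n : ℕ} (P : MvPolynomial (Fin n) ℝ) (a v : Fin n → ℝ) :
    (MvPolynomial.aeval (fun i => Polynomial.C (a i) + Polynomial.C (v i) * Polynomial.X)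
        P).natDegree ≤ P.totalDegree := by
  set f : Fin n → Polynomial ℝ :=
    fun i => Polynomial.C (a i) + Polynomial.C (v i) * Polynomial.X with hf
  have hfdeg : ∀ i, (f i).natDegree ≤ 1 := by
    intro i
    refine (Polynomial.natDegree_add_le _ _).trans ?_
    simp only [Polynomial.natDegree_C, max_le_iff]
    exact ⟨Nat.zero_le _, (Polynomial.natDegree_C_mul_le _ _).trans (by simp)⟩
  conv_lhs => rw [P.as_sum]
  rw [map_sum]
  apply Polynomial.natDegree_sum_le_of_forall_le
  intro d hd
  rw [MvPolynomial.aeval_monomial]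
  refine (Polynomial.natDegree_mul_le).trans ?_
  have h1 : (algebraMap ℝ (Polynomial ℝ) (MvPolynomial.coeff d P)).natDegree = 0 := by
    simp [Polynomial.algebraMap_eq]
  rw [h1, zero_add]
  have h2 : (d.prod fun i e => f i ^ e).natDegree ≤ ∑ i ∈ d.support, d i := by
    rw [Finsupp.prod]
    refine (Polynomial.natDegree_prod_le _ _).trans ?_
    apply Finset.sum_le_sum
    intro i _
    calc (f i ^ d i).natDegree ≤ d i * (f i).natDegree := Polynomial.natDegree_pow_le
      _ ≤ d i * 1 := Nat.mul_le_mul_left _ (hfdeg i)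
      _ = d i := Nat.mul_one _
  refine h2.trans ?_
  have : (∑ i ∈ d.support, d i) = d.sum fun _ e => e := rfl
  rw [this]
  exact MvPolynomial.le_totalDegree hd

/-- A line meets at most `D + 1` of the open cells cut out by a nonzero polynomial of
degree at most `D`: if `P : ℝⁿ → ℝ` is a nonzero polynomial with total degree `≤ D` and
`ℓ(t) = a + t • v` is a line (with `v ≠ 0`) on which `P` does not vanish identically,
then the image of `ℓ` meets at most `D + 1` connected components of `{x | P x ≠ 0}`. -/
theorem line_meets_at_most_D_add_one_cells (n D : ℕ)
    (P : MvPolynomial (Fin n) ℝ) (hP : P ≠ 0) (hdeg : P.totalDegree ≤ D)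
    (a v : Fin n → ℝ) (hv : v ≠ 0)
    (hline : ∃ t : ℝ, MvPolynomial.eval (a + t • v) P ≠ 0) :
    letI S : Set (Fin n → ℝ) := {x | MvPolynomial.eval x P ≠ 0}
    letI 𝒞 : Set (Set (Fin n → ℝ)) :=
      {C | ∃ t : ℝ, a + t • v ∈ S ∧ C = connectedComponentIn S (a + t • v)}
    𝒞.Finite ∧ 𝒞.ncard ≤ D + 1 := by
  set S : Set (Fin n → ℝ) := {x | MvPolynomial.eval x P ≠ 0} with hS
  set 𝒞 : Set (Set (Fin n → ℝ)) :=
    {C | ∃ t : ℝ, a + t • v ∈ S ∧ C = connectedComponentIn S (a + t • v)} with h𝒞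
  show 𝒞.Finite ∧ 𝒞.ncard ≤ D + 1
  -- the univariate polynomial obtained by restriction to the line
  set Q : Polynomial ℝ :=
    MvPolynomial.aeval (fun i => Polynomial.C (a i) + Polynomial.C (v i) * Polynomial.X) P
    with hQdef
  have hQeval : ∀ t : ℝ, Q.eval t = MvPolynomial.eval (a + t • v) P :=
    fun t => eval_aeval_line P a v t
  have hQ0 : Q ≠ 0 := by
    obtain ⟨t, ht⟩ := hline
    intro h
    exact ht (by rw [← hQeval t, h, Polynomial.eval_zero])
  -- the root set
  set Z : Set ℝ := {t | Q.eval t = 0} with hZdef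
  have hZfin : Z.Finite := Polynomial.finite_setOf_isRoot hQ0
  have hZcard : Z.ncard ≤ D := by
    have hsub : Z ⊆ (Q.roots.toFinset : Set ℝ) := by
      intro t ht
      rw [Finset.mem_coe, Multiset.mem_toFinset]
      exact Polynomial.mem_roots'.mpr ⟨hQ0, ht⟩
    calc Z.ncard ≤ (Q.roots.toFinset : Set ℝ).ncard :=
          Set.ncard_le_ncard hsub (Q.roots.toFinset.finite_toSet)
      _ = Q.roots.toFinset.card := Set.ncard_coe_finset _
      _ ≤ Multiset.card Q.roots := Multiset.toFinset_card_le _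
      _ ≤ Q.natDegree := Q.card_roots'
      _ ≤ P.totalDegree := natDegree_aeval_line P a v
      _ ≤ D := hdeg
  have hTZ : Zᶜ = {t : ℝ | Q.eval t ≠ 0} := by ext t; simp [hZdef]
  set T : Set ℝ := Zᶜ with hTdef
  -- the line map and its continuity
  set ℓ : ℝ → (Fin n → ℝ) := fun t => a + t • v with hℓ
  have hℓcont : Continuous ℓ := by
    apply continuous_const.add
    exact continuous_id.smul continuous_const
  have hℓS : ∀ {t : ℝ}, t ∈ T → ℓ t ∈ S := by
    intro t ht
    have : Q.eval t ≠ 0 := by rw [hTZ] at ht; exact ht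
    rw [hQeval t] at this
    exact this
  -- the cell map is constant on components of T
  have hconst : ∀ {t : ℝ}, t ∈ T → ∀ {t' : ℝ}, t' ∈ connectedComponentIn T t →
      connectedComponentIn S (ℓ t') = connectedComponentIn S (ℓ t) := by
    intro t ht t' ht'
    have hK : IsPreconnected (ℓ '' connectedComponentIn T t) :=
      isPreconnected_connectedComponentIn.image ℓ hℓcont.continuousOn
    have hKS : ℓ '' connectedComponentIn T t ⊆ S := by
      rintro _ ⟨s, hs, rfl⟩
      exact hℓS (connectedComponentIn_subset T t hs)
    have hsub : ℓ '' connectedComponentIn T t ⊆ connectedComponentIn S (ℓ t) :=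
      hK.subset_connectedComponentIn
        (mem_image_of_mem ℓ (mem_connectedComponentIn ht)) hKS
    exact (connectedComponentIn_eq (hsub (mem_image_of_mem ℓ ht'))).symm
  -- components of T
  set F : Set (Set ℝ) := (fun t => connectedComponentIn T t) '' T with hFdef
  obtain ⟨hFfin, hFcard⟩ := components_compl_finite_card Z hZfin
  rw [← hTdef, ← hFdef] at hFfin hFcard
  -- 𝒞 is the image of F
  set h : Set ℝ → Set (Fin n → ℝ) :=
    fun I => ⋃ t ∈ I, connectedComponentIn S (ℓ t) with hhdef
  have h𝒞F : 𝒞 = h '' F := by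
    ext C
    constructor
    · rintro ⟨t, htS, rfl⟩
      have htT : t ∈ T := by
        rw [hTZ]
        show Q.eval t ≠ 0
        rw [hQeval t]; exact htS
      refine ⟨connectedComponentIn T t, ⟨t, htT, rfl⟩, ?_⟩
      show (⋃ t' ∈ connectedComponentIn T t, connectedComponentIn S (ℓ t'))
          = connectedComponentIn S (a + t • v)
      have : (⋃ t' ∈ connectedComponentIn T t, connectedComponentIn S (ℓ t'))
          = ⋃ t' ∈ connectedComponentIn T t, connectedComponentIn S (ℓ t) :=
        Set.iUnion₂_congr fun t' ht' => hconst htT ht'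
      rw [this, Set.biUnion_const ⟨t, mem_connectedComponentIn htT⟩]
    · rintro ⟨I, ⟨t, htT, rfl⟩, rfl⟩
      refine ⟨t, hℓS htT, ?_⟩
      show (⋃ t' ∈ connectedComponentIn T t, connectedComponentIn S (ℓ t'))
          = connectedComponentIn S (a + t • v)
      have : (⋃ t' ∈ connectedComponentIn T t, connectedComponentIn S (ℓ t'))
          = ⋃ t' ∈ connectedComponentIn T t, connectedComponentIn S (ℓ t) :=
        Set.iUnion₂_congr fun t' ht' => hconst htT ht'
      rw [this, Set.biUnion_const ⟨t, mem_connectedComponentIn htT⟩]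
  rw [h𝒞F]
  refine ⟨hFfin.image h, ?_⟩
  calc (h '' F).ncard ≤ F.ncard := Set.ncard_image_le hFfin
    _ ≤ Z.ncard + 1 := hFcard
    _ ≤ D + 1 := add_le_add_left hZcard 1
end
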